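/- Let y be a nonempty finite string over a linearly ordered alphabet and let x = y ++ x' for some finite string x'. Then lcp(x, y^∞) = |y| + lcp(x', x), and x ≺ y^∞ if and only if x' <lex x. -/

import Mathlib

/-- The length of the longest common prefix of two lists. -/
def lcp {α : Type*} [DecidableEq α] : List α → List α → ℕ
  | a :: x, b :: y => if a = b then lcp x y + 1 else 0
  | _, _ => 0

/-- The first `m` characters of the infinite periodic sequence `y^∞`
    (for nonempty `y`). -/
def infTake {α : Type*} (y : List α) (m : ℕ) : List α :=
  ((List.replicate m y).flatten).take m

section Aux

variable {α : Type*}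

lemma lcp_nil_right [DecidableEq α] (a : List α) : lcp a ([] : List α) = 0 := by
  cases a <;> rfl

lemma lcp_append_left [DecidableEq α] (c a b : List α) :
    lcp (c ++ a) (c ++ b) = c.length + lcp a b := by
  induction c with
  | nil => simp
  | cons h t ih => simp [lcp, ih]; omega

lemma lcp_take [DecidableEq α] : ∀ a b : List α, lcp a (b.take a.length) = lcp a b
  | [], b => by cases b <;> rfl
  | a :: x, [] => rfl
  | a :: x, b :: y => by
    simp only [List.length_cons, List.take_succ_cons, lcp]
    rw [lcp_take x y]

lemma lcp_not_prefix [DecidableEq α] :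
    ∀ (y a t : List α), ¬ y <+: a → lcp a (y ++ t) = lcp a y
  | [], a, t, h => absurd (List.nil_prefix) h
  | b :: y, [], t, h => rfl
  | b :: y, a :: x, t, h => by
    simp only [List.cons_append, lcp]
    by_cases hab : a = b
    · subst hab
      have h' : ¬ y <+: x := fun hp => h (by obtain ⟨u, rfl⟩ := hp; exact ⟨u, rfl⟩)
      rw [lcp_not_prefix y x t h']
    · simp [hab]

lemma lex_append_left_iff [LinearOrder α] (c a b : List α) :
    List.Lex (· < ·) (c ++ a) (c ++ b) ↔ List.Lex (· < ·) a b := by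
  induction c with
  | nil => rfl
  | cons h t ih => simpa [List.cons_lt_cons_iff] using ih

lemma lex_cons_cons_iff [LinearOrder α] (a b : α) (x y : List α) :
    List.Lex (· < ·) (a :: x) (b :: y) ↔ a < b ∨ (a = b ∧ List.Lex (· < ·) x y) := by
  constructor
  · intro h
    cases h with
    | cons h => exact Or.inr ⟨rfl, h⟩
    | rel h => exact Or.inl h
  · rintro (h | ⟨rfl, h⟩)
    · exact List.Lex.rel h
    · exact List.Lex.cons h

lemma nil_lex_iff [LinearOrder α] (b : List α) :
    List.Lex (· < ·) ([] : List α) b ↔ b ≠ [] := by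
  cases b with
  | nil => simp
  | cons h t => simp [List.Lex.nil]

lemma lex_take_iff [LinearOrder α] :
    ∀ a b : List α, List.Lex (· < ·) a b ↔
      List.Lex (· < ·) a (b.take a.length) ∨ (b.take a.length = a ∧ a.length < b.length)
  | [], b => by
    cases b <;> simp [nil_lex_iff]
  | a :: x, [] => by simp [List.not_lex_nil]
  | a :: x, b :: y => by
    simp only [List.length_cons, List.take_succ_cons, lex_cons_cons_iff, List.cons.injEq,
      List.length_cons]
    rw [lex_take_iff x y]
    constructor
    · rintro (h | ⟨rfl, (h | ⟨h1, h2⟩)⟩)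
      · exact Or.inl (Or.inl h)
      · exact Or.inl (Or.inr ⟨rfl, h⟩)
      · exact Or.inr ⟨⟨rfl, h1⟩, by omega⟩
    · rintro ((h | ⟨rfl, h⟩) | ⟨⟨rfl, h1⟩, h2⟩)
      · exact Or.inl h
      · exact Or.inr ⟨rfl, Or.inl h⟩
      · exact Or.inr ⟨rfl, Or.inr ⟨h1, by omega⟩⟩

lemma lex_not_prefix_iff [LinearOrder α] :
    ∀ (y a t : List α), ¬ y <+: a →
      (List.Lex (· < ·) a (y ++ t) ↔ List.Lex (· < ·) a y)
  | [], a, t, h => absurd List.nil_prefix h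
  | b :: y, [], t, h => by simp [nil_lex_iff]
  | b :: y, a :: x, t, h => by
    simp only [List.cons_append, lex_cons_cons_iff]
    by_cases hab : a = b
    · subst hab
      have h' : ¬ y <+: x := fun hp => h (by obtain ⟨u, rfl⟩ := hp; exact ⟨u, rfl⟩)
      rw [lex_not_prefix_iff y x t h']
    · simp [hab]

lemma infTake_of_le {y : List α} {k : ℕ} (h : k ≤ y.length) :
    infTake y k = y.take k := by
  cases k with
  | zero => simp [infTake]
  | succ n =>
    unfold infTake
    rw [show List.replicate (n+1) y = y :: List.replicate n y from rfl]
    rw [List.flatten_cons, List.take_append_of_le_length h]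

lemma infTake_add (y : List α) (hy : y ≠ []) (k : ℕ) :
    infTake y (y.length + k) = y ++ infTake y k := by
  have hy1 : 1 ≤ y.length := List.length_pos_iff.mpr hy
  unfold infTake
  have h1 : y.length + k = (y.length + k - 1) + 1 := by omega
  rw [h1, List.replicate_succ, List.flatten_cons,
    List.take_append]
  have h2 : y.take (y.length + k - 1 + 1) = y := List.take_of_length_le (by omega)
  rw [h2]
  congr 1
  have h3 : y.length + k - 1 + 1 - y.length = k := by omega
  have h4 : y.length + k - 1 = k + (y.length - 1) := by omega
  first
  | rfl
  | rw [h3, h4, List.replicate_add, List.flatten_append,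
      List.take_append_of_le_length (by simpa using Nat.le_mul_of_pos_right k hy1)]

lemma lcp_infTake [LinearOrder α] (y : List α) (hy : y ≠ []) :
    ∀ n (x' : List α), x'.length ≤ n →
      lcp x' (infTake y x'.length) = lcp x' (y ++ x') := by
  have hy1 : 1 ≤ y.length := List.length_pos_iff.mpr hy
  intro n
  induction n with
  | zero =>
    intro x' h
    have : x' = [] := List.eq_nil_of_length_eq_zero (by omega)
    subst this
    simp [infTake, lcp]
  | succ n ih =>
    intro x' hlen
    by_cases hle : x'.length ≤ y.length
    · rw [infTake_of_le hle, ← lcp_take x' (y ++ x'),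
        List.take_append_of_le_length hle]
    · by_cases hpre : y <+: x'
      · obtain ⟨x'', rfl⟩ := hpre
        have hlen' : x''.length ≤ n := by
          rw [List.length_append] at hlen; omega
        rw [List.length_append, infTake_add y hy, lcp_append_left,
          show y ++ (y ++ x'') = y ++ y ++ x'' by simp,
          show (y ++ y ++ x'' : List α) = y ++ (y ++ x'') by simp,
          lcp_append_left, ih x'' hlen']
      · have : x'.length = y.length + (x'.length - y.length) := by omega
        rw [this, infTake_add y hy, lcp_not_prefix y x' _ hpre,
          lcp_not_prefix y x' x' hpre]

lemma lex_infTake [LinearOrder α] (y : List α) (hy : y ≠ []) :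
    ∀ n (x' : List α), x'.length ≤ n →
      ((List.Lex (· < ·) x' (infTake y x'.length) ∨ x' = infTake y x'.length) ↔
        List.Lex (· < ·) x' (y ++ x')) := by
  have hy1 : 1 ≤ y.length := List.length_pos_iff.mpr hy
  intro n
  induction n with
  | zero =>
    intro x' h
    have : x' = [] := List.eq_nil_of_length_eq_zero (by omega)
    subst this
    simp only [List.length_nil, infTake, List.take_zero, List.append_nil]
    simp only [nil_lex_iff]
    simp [hy]
  | succ n ih =>
    intro x' hlen
    by_cases hle : x'.length ≤ y.length
    · rw [infTake_of_le hle, lex_take_iff x' (y ++ x'),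
        List.take_append_of_le_length hle]
      have hl : x'.length < (y ++ x').length := by
        rw [List.length_append]; omega
      constructor
      · rintro (h | h)
        · exact Or.inl h
        · exact Or.inr ⟨h.symm, hl⟩
      · rintro (h | ⟨h, -⟩)
        · exact Or.inl h
        · exact Or.inr h.symm
    · by_cases hpre : y <+: x'
      · obtain ⟨x'', rfl⟩ := hpre
        have hlen' : x''.length ≤ n := by
          rw [List.length_append] at hlen; omega
        rw [List.length_append, infTake_add y hy, lex_append_left_iff,
          List.append_cancel_left_eq,
          show y ++ (y ++ x'') = y ++ y ++ x'' by simp,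
          show (y ++ y ++ x'' : List α) = y ++ (y ++ x'') by simp,
          lex_append_left_iff, ih x'' hlen']
      · have heq : x'.length = y.length + (x'.length - y.length) := by omega
        rw [heq, infTake_add y hy,
          lex_not_prefix_iff y x' _ hpre, lex_not_prefix_iff y x' x' hpre]
        constructor
        · rintro (h | h)
          · exact h
          · exact absurd ⟨_, h.symm⟩ hpre
        · exact Or.inl

end Aux

/-- If `y` is nonempty and `x = y ++ x'`, then `lcp(x, y^∞) = |y| + lcp(x', x)`,
    and `x ≺ y^∞ ↔ x' <lex x`. -/
theorem lcp_infTake_of_prefix {α : Type*} [LinearOrder α] (x x' y : List α)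
    (hy : y ≠ []) (hx : x = y ++ x') :
    lcp x (infTake y x.length) = y.length + lcp x' x ∧
    ((List.Lex (· < ·) x (infTake y x.length) ∨ x = infTake y x.length) ↔
      List.Lex (· < ·) x' x) := by
  subst hx
  rw [List.length_append, infTake_add y hy]
  constructor
  · rw [lcp_append_left, lcp_infTake y hy x'.length x' le_rfl]
  · rw [lex_append_left_iff, List.append_cancel_left_eq,
      lex_infTake y hy x'.length x' le_rfl]
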